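/- Let G be a topological group and let K be a closed commensurated subgroup of G (i.e. for every g ∈ G, K ∩ gKg⁻¹ has finite index in both K and gKg⁻¹). Then K is codistal in G: the left translation action of G on G/K is distal. -/

import Mathlib

open Topology Pointwise

/-- The double coset `K s K` of a commensurated closed subgroup is closed, being a finite
union of closed left cosets of `K`. -/
lemma isClosed_doubleCoset {G : Type*} [Group G] [TopologicalSpace G]
    [IsTopologicalGroup G] (K : Subgroup G) (hK : IsClosed (K : Set G)) (s : G)
    (hfin : (K.map (MulAut.conj s).toMonoidHom).relIndex K ≠ 0) :
    IsClosed {g : G | ∃ k₁ ∈ K, ∃ k₂ ∈ K, g = k₁ * s * k₂} := by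
  set H : Subgroup K := (K.map (MulAut.conj s).toMonoidHom).subgroupOf K with hH
  have hHfin : H.index ≠ 0 := hfin
  haveI : Finite (K ⧸ H) := by
    rw [Subgroup.index] at hHfin
    exact Nat.finite_of_card_ne_zero hHfin
  have hset : {g : G | ∃ k₁ ∈ K, ∃ k₂ ∈ K, g = k₁ * s * k₂} =
      ⋃ (q : K ⧸ H), (((Quotient.out q : K) : G) * s) • (K : Set G) := by
    ext g
    constructor
    · rintro ⟨k₁, hk₁, k₂, hk₂, rfl⟩
      set q : K ⧸ H := QuotientGroup.mk ⟨k₁, hk₁⟩ with hq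
      refine Set.mem_iUnion.2 ⟨q, ?_⟩
      have hout : (QuotientGroup.mk (Quotient.out q) : K ⧸ H) = q :=
        QuotientGroup.out_eq' q
      rw [hq] at hout
      have hmem : ((Quotient.out q)⁻¹ * ⟨k₁, hk₁⟩ : K) ∈ H := (QuotientGroup.eq).1 hout
      have hmem2 : ((Quotient.out q : K) : G)⁻¹ * k₁ ∈
          K.map (MulAut.conj s).toMonoidHom := Subgroup.mem_subgroupOf.1 hmem
      obtain ⟨m, hm, hms⟩ := hmem2
      -- hms : conj s m = (out q)⁻¹ * k₁ as elements of G
      have hms' : s * m * s⁻¹ = ((Quotient.out q : K) : G)⁻¹ * k₁ := by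
        simpa using hms
      refine ⟨m * k₂, ?_, ?_⟩
      · exact K.mul_mem hm hk₂
      · have : k₁ = ((Quotient.out q : K) : G) * (s * m * s⁻¹) := by
          rw [hms']; group
        rw [this]; simp only [smul_eq_mul]; group
    · intro hg
      obtain ⟨q, hq⟩ := Set.mem_iUnion.1 hg
      obtain ⟨k, hk, rfl⟩ := hq
      exact ⟨((Quotient.out q : K) : G), (Quotient.out q : K).2, k, hk, rfl⟩
  rw [hset]
  exact isClosed_iUnion_of_finite fun q => hK.smul _

/-- A closed commensurated subgroup of a topological group is codistal: the left
translation action of `G` on `G/K` is distal. -/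
theorem codistal_of_commensurated {G : Type*} [Group G] [TopologicalSpace G]
    [IsTopologicalGroup G] (K : Subgroup G) (hK : IsClosed (K : Set G))
    (hcomm : ∀ g : G,
      (K.map (MulAut.conj g).toMonoidHom).relIndex K ≠ 0 ∧
      K.relIndex (K.map (MulAut.conj g).toMonoidHom) ≠ 0) :
    ∀ x y : G, (QuotientGroup.mk x : G ⧸ K) ≠ QuotientGroup.mk y →
      ¬ ∃ z : G ⧸ K, (z, z) ∈ closure {p : (G ⧸ K) × (G ⧸ K) |
        ∃ g : G, p = (QuotientGroup.mk (g * x), QuotientGroup.mk (g * y))} := by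
  intro x y hxy ⟨z, hz⟩
  set s : G := x⁻¹ * y with hs_def
  have hs : s ∉ K := fun h => hxy (QuotientGroup.eq.2 h)
  obtain ⟨w, rfl⟩ := QuotientGroup.mk_surjective z
  set KsK : Set G := {g : G | ∃ k₁ ∈ K, ∃ k₂ ∈ K, g = k₁ * s * k₂} with hKsK
  have hclosed : IsClosed KsK := isClosed_doubleCoset K hK s (hcomm s).1
  set D : Set G := (fun g => w⁻¹ * g * w) ⁻¹' KsK with hD
  have hDclosed : IsClosed D :=
    hclosed.preimage (by continuity)
  -- 1 ∈ closure D
  have h1 : (1 : G) ∈ closure D := by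
    rw [mem_closure_iff]
    intro U hUopen hU1
    -- get a symmetric neighborhood V with V⁻¹ * V ⊆ U
    obtain ⟨W, hWopen, hW1, hWU⟩ :=
      exists_open_nhds_one_mul_subset (hUopen.mem_nhds hU1)
    set V : Set G := W ∩ W⁻¹ with hV
    have hVopen : IsOpen V := hWopen.inter (hWopen.preimage continuous_inv)
    have hV1 : (1 : G) ∈ V := ⟨hW1, by simpa using hW1⟩
    have hVU : ∀ a ∈ V, ∀ b ∈ V, a⁻¹ * b ∈ U := by
      intro a ha b hb
      exact hWU (Set.mul_mem_mul ha.2 hb.1)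
    -- the open set π '' (V * w) in the quotient
    set Vw : Set G := (fun v => v * w) '' V with hVw
    have hVwopen : IsOpen Vw := (Homeomorph.mulRight w).isOpen_image.2 hVopen
    set O : Set (G ⧸ K) := QuotientGroup.mk '' Vw with hO
    have hOopen : IsOpen O := QuotientGroup.isOpenMap_coe Vw hVwopen
    have hOz : (QuotientGroup.mk w : G ⧸ K) ∈ O :=
      ⟨w, ⟨1, hV1, one_mul w⟩, rfl⟩
    have := (mem_closure_iff.1 hz) (O ×ˢ O) (hOopen.prod hOopen) ⟨hOz, hOz⟩
    obtain ⟨p, ⟨hp1, hp2⟩, g, rfl⟩ := this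
    obtain ⟨a, ⟨v₁, hv₁, rfl⟩, ha⟩ := hp1
    obtain ⟨b, ⟨v₂, hv₂, rfl⟩, hb⟩ := hp2
    -- ha : mk (v₁ * w) = mk (g * x), hb : mk (v₂ * w) = mk (g * y)
    have hk₁ : (v₁ * w)⁻¹ * (g * x) ∈ K := QuotientGroup.eq.1 ha
    have hk₂ : (v₂ * w)⁻¹ * (g * y) ∈ K := QuotientGroup.eq.1 hb
    refine ⟨v₁⁻¹ * v₂, hVU v₁ hv₁ v₂ hv₂, ?_⟩
    show w⁻¹ * (v₁⁻¹ * v₂) * w ∈ KsK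
    refine ⟨(v₁ * w)⁻¹ * (g * x), hk₁, ((v₂ * w)⁻¹ * (g * y))⁻¹, K.inv_mem hk₂, ?_⟩
    rw [hs_def]; group
  rw [hDclosed.closure_eq] at h1
  -- 1 ∈ D gives s ∈ K, contradiction
  obtain ⟨k₁, hk₁, k₂, hk₂, hEq⟩ := h1
  have h1' : (1 : G) = k₁ * s * k₂ := by
    have : w⁻¹ * 1 * w = (1 : G) := by group
    rw [← this]; exact hEq
  have hs2 : s = k₁⁻¹ * (k₁ * s * k₂) * k₂⁻¹ := by group
  rw [← h1'] at hs2
  have : s = k₁⁻¹ * k₂⁻¹ := by simpa using hs2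
  exact hs (this ▸ K.mul_mem (K.inv_mem hk₁) (K.inv_mem hk₂))
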